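/- (Convolutional AOL Layers, maximally padded case) Let k, n, c_I, c_O be positive integers, m = n + k − 1, P ∈ ℝ^{k×k×c_I×c_O} a convolution kernel with zero-extension P̃, and J the matrix of the maximally padded convolution defined by J^{(b,a)}_{(i₂,j₂),(i₁,j₁)} = P̃^{(a,b)}_{i₁−i₂+k−1, j₁−j₂+k−1}. For each channel c ∈ {1..c_I} define d_c = ( ∑_{Δi=−(k−1)}^{k−1} ∑_{Δj=−(k−1)}^{k−1} ∑_{a=1}^{c_I} | ∑_{i,j} ∑_{b=1}^{c_O} P̃^{(a,b)}_{i,j} P̃^{(c,b)}_{i+Δi, j+Δj} | )^{−1/2} if the bracketed sum is nonzero and d_c = 0 otherwise, and let D be the diagonal matrix on the column index set {1..c_I}×{1..n}² whose entry at (c, i₁, j₁) is d_c. Then the spectral norm of JD is at most 1; equivalently, the channel-wise rescaled maximally padded convolution x ↦ J(Dx) is 1-Lipschitz with respect to the Euclidean norms, and therefore so is any convolutional layer obtained from it by composing with a center-cropping of the output and adding a bias. -/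

import Mathlib

open Matrix BigOperators

/-- Zero-extension of a `k × k` convolution kernel `P` (with `c_I` input and
`c_O` output channels): `zext P a b p q = P^{(a,b)}_{p,q}` for
`0 ≤ p, q ≤ k − 1`, and `0` otherwise. -/
noncomputable def zext {k cI cO : ℕ} (P : Fin k → Fin k → Fin cI → Fin cO → ℝ)
    (a : Fin cI) (b : Fin cO) (p q : ℤ) : ℝ :=
  if h : 0 ≤ p ∧ p < (k : ℤ) ∧ 0 ≤ q ∧ q < (k : ℤ) then
    P ⟨p.toNat, by omega⟩ ⟨q.toNat, by omega⟩ a b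
  else 0

/-- Jacobian of the maximally padded 2D multi-channel convolution with kernel
`P`. -/
noncomputable def convJacobian (k n cI cO : ℕ)
    (P : Fin k → Fin k → Fin cI → Fin cO → ℝ) :
    Matrix (Fin cO × Fin (n + k - 1) × Fin (n + k - 1)) (Fin cI × Fin n × Fin n) ℝ :=
  fun out inp =>
    zext P inp.1 out.1
      ((inp.2.1 : ℤ) - (out.2.1 : ℤ) + (k : ℤ) - 1)
      ((inp.2.2 : ℤ) - (out.2.2 : ℤ) + (k : ℤ) - 1)

open Finset

lemma zext_eq_zero {k cI cO : ℕ} (P : Fin k → Fin k → Fin cI → Fin cO → ℝ)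
    (a : Fin cI) (b : Fin cO) (p q : ℤ)
    (h : p < 0 ∨ (k:ℤ) ≤ p ∨ q < 0 ∨ (k:ℤ) ≤ q) : zext P a b p q = 0 := by
  rw [zext, dif_neg]; omega

noncomputable def Hfun {k cI cO : ℕ} (P : Fin k → Fin k → Fin cI → Fin cO → ℝ)
    (c a : Fin cI) (Δi Δj : ℤ) : ℝ :=
  ∑ i : Fin k, ∑ j : Fin k, ∑ b : Fin cO,
    zext P c b (i:ℤ) (j:ℤ) * zext P a b ((i:ℤ) + Δi) ((j:ℤ) + Δj)

lemma Hfun_zero {k cI cO : ℕ} (P : Fin k → Fin k → Fin cI → Fin cO → ℝ)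
    (c a : Fin cI) (Δi Δj : ℤ)
    (h : Δi ∉ Finset.Icc (-(k:ℤ)+1) ((k:ℤ)-1) ∨ Δj ∉ Finset.Icc (-(k:ℤ)+1) ((k:ℤ)-1)) :
    Hfun P c a Δi Δj = 0 := by
  rw [Hfun]
  apply Finset.sum_eq_zero; intro i _
  apply Finset.sum_eq_zero; intro j _
  apply Finset.sum_eq_zero; intro b _
  rw [zext_eq_zero P a b ((i:ℤ)+Δi) ((j:ℤ)+Δj), mul_zero]
  simp only [Finset.mem_Icc, not_and_or, not_le] at h
  have hi := i.isLt; have hj := j.isLt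
  omega

lemma sum_Icc_shift (f : ℤ → ℝ) (a b c : ℤ) :
    ∑ i ∈ Finset.Icc a b, f i = ∑ i ∈ Finset.Icc (a - c) (b - c), f (i + c) := by
  apply Finset.sum_nbij' (fun i => i - c) (fun i => i + c) <;>
    simp_all [Finset.mem_Icc] <;> intros <;> omega

lemma sum_window {k : ℕ} (g : ℤ → ℝ) (hg : ∀ i : ℤ, i < 0 ∨ (k:ℤ) ≤ i → g i = 0)
    {lo hi : ℤ} (hlo : lo ≤ 0) (hhi : (k:ℤ) - 1 ≤ hi) :
    ∑ i ∈ Finset.Icc lo hi, g i = ∑ i : Fin k, g (i:ℤ) := by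
  have h1 : ∑ i : Fin k, g (i:ℤ) = ∑ i ∈ Finset.Icc (0:ℤ) ((k:ℤ)-1), g i := by
    rw [Fin.sum_univ_eq_sum_range (fun i : ℕ => g (i:ℤ))]
    apply Finset.sum_nbij' (fun i : ℕ => (i:ℤ)) (fun i : ℤ => i.toNat) <;>
      simp_all [Finset.mem_Icc, Finset.mem_range] <;> intros <;> omega
  rw [h1]
  symm
  apply Finset.sum_subset
  · intro x hx; simp_all [Finset.mem_Icc]; omega
  · intro x hx hx'; apply hg; simp_all [Finset.mem_Icc]; omega

lemma sum_fin_shift (m : ℕ) (c : ℤ) (f : ℤ → ℝ) :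
    ∑ i : Fin m, f (c - (i:ℤ)) = ∑ i ∈ Finset.Icc (c - (m:ℤ) + 1) c, f i := by
  rw [Fin.sum_univ_eq_sum_range (fun i : ℕ => f (c - (i:ℤ)))]
  symm
  apply Finset.sum_nbij' (fun i : ℤ => (c - i).toNat) (fun i : ℕ => c - (i:ℤ)) <;>
    simp_all [Finset.mem_Icc, Finset.mem_range] <;> intros <;> omega

-- T_eq
lemma T_eq {k n cI cO : ℕ} (hk : 0 < k) (hn : 0 < n)
    (P : Fin k → Fin k → Fin cI → Fin cO → ℝ)
    (c a : Fin cI) (i₁ j₁ : Fin n) (i₁' j₁' : Fin n) :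
    ∑ o : Fin cO × Fin (n + k - 1) × Fin (n + k - 1),
      convJacobian k n cI cO P o (c, i₁, j₁) * convJacobian k n cI cO P o (a, i₁', j₁')
    = Hfun P c a ((i₁':ℤ) - (i₁:ℤ)) ((j₁':ℤ) - (j₁:ℤ)) := by
  have hm : ((n + k - 1 : ℕ) : ℤ) = (n:ℤ) + (k:ℤ) - 1 := by omega
  set Δi : ℤ := (i₁':ℤ) - (i₁:ℤ) with hΔi
  set Δj : ℤ := (j₁':ℤ) - (j₁:ℤ) with hΔj
  set f : Fin cO → ℤ → ℤ → ℝ := fun b i j =>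
    zext P c b i j * zext P a b (i + Δi) (j + Δj) with hf
  have key : ∀ b : Fin cO,
      (∑ i₂ : Fin (n+k-1), ∑ j₂ : Fin (n+k-1),
        f b ((i₁:ℤ) + (k:ℤ) - 1 - (i₂:ℤ)) ((j₁:ℤ) + (k:ℤ) - 1 - (j₂:ℤ)))
      = ∑ i : Fin k, ∑ j : Fin k, f b (i:ℤ) (j:ℤ) := by
    intro b
    have inner : ∀ x : ℤ, (∑ j₂ : Fin (n+k-1), f b x ((j₁:ℤ) + (k:ℤ) - 1 - (j₂:ℤ)))
        = ∑ j : Fin k, f b x (j:ℤ) := by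
      intro x
      rw [sum_fin_shift (n+k-1) ((j₁:ℤ) + (k:ℤ) - 1) (fun y => f b x y)]
      apply sum_window
      · intro i hi
        simp only [hf]
        rw [zext_eq_zero P c b x i (by omega), zero_mul]
      · have := j₁.isLt; omega
      · omega
    simp_rw [inner]
    rw [Finset.sum_comm]
    have inner2 : ∀ j : Fin k, (∑ i₂ : Fin (n+k-1), f b ((i₁:ℤ) + (k:ℤ) - 1 - (i₂:ℤ)) (j:ℤ))
        = ∑ i : Fin k, f b (i:ℤ) (j:ℤ) := by
      intro j
      rw [sum_fin_shift (n+k-1) ((i₁:ℤ) + (k:ℤ) - 1) (fun y => f b y (j:ℤ))]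
      apply sum_window
      · intro i hi
        simp only [hf]
        rw [zext_eq_zero P c b i (j:ℤ) (by omega), zero_mul]
      · have := i₁.isLt; omega
      · omega
    simp_rw [inner2]
    rw [Finset.sum_comm]
  calc ∑ o : Fin cO × Fin (n + k - 1) × Fin (n + k - 1),
      convJacobian k n cI cO P o (c, i₁, j₁) * convJacobian k n cI cO P o (a, i₁', j₁')
      = ∑ b : Fin cO, ∑ i₂ : Fin (n+k-1), ∑ j₂ : Fin (n+k-1),
          f b ((i₁:ℤ) + (k:ℤ) - 1 - (i₂:ℤ)) ((j₁:ℤ) + (k:ℤ) - 1 - (j₂:ℤ)) := by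
        rw [Fintype.sum_prod_type]
        congr 1; ext b
        rw [Fintype.sum_prod_type]
        congr 1; ext i₂; congr 1; ext j₂
        simp only [convJacobian, hf]
        have e1 : (i₁:ℤ) - (i₂:ℤ) + (k:ℤ) - 1 = (i₁:ℤ) + (k:ℤ) - 1 - (i₂:ℤ) := by ring
        have e2 : (j₁:ℤ) - (j₂:ℤ) + (k:ℤ) - 1 = (j₁:ℤ) + (k:ℤ) - 1 - (j₂:ℤ) := by ring
        have e3 : (i₁':ℤ) - (i₂:ℤ) + (k:ℤ) - 1 = (i₁:ℤ) + (k:ℤ) - 1 - (i₂:ℤ) + Δi := by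
          rw [hΔi]; ring
        have e4 : (j₁':ℤ) - (j₂:ℤ) + (k:ℤ) - 1 = (j₁:ℤ) + (k:ℤ) - 1 - (j₂:ℤ) + Δj := by
          rw [hΔj]; ring
        rw [e1, e2, e3, e4]
    _ = ∑ b : Fin cO, ∑ i : Fin k, ∑ j : Fin k, f b (i:ℤ) (j:ℤ) := by
        congr 1; ext b; exact key b
    _ = Hfun P c a Δi Δj := by
        rw [Hfun, Finset.sum_comm]
        congr 1; ext i
        rw [Finset.sum_comm]

lemma H_eq_G {k cI cO : ℕ} (P : Fin k → Fin k → Fin cI → Fin cO → ℝ)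
    (c a : Fin cI) (Δi Δj : ℤ)
    (hΔi : Δi ∈ Finset.Icc (-(k:ℤ)+1) ((k:ℤ)-1))
    (hΔj : Δj ∈ Finset.Icc (-(k:ℤ)+1) ((k:ℤ)-1)) :
    Hfun P c a Δi Δj
    = ∑ i : Fin k, ∑ j : Fin k, ∑ b : Fin cO,
        zext P a b (i:ℤ) (j:ℤ) * zext P c b ((i:ℤ) + (-Δi)) ((j:ℤ) + (-Δj)) := by
  simp only [Finset.mem_Icc] at hΔi hΔj
  set g : ℤ → ℤ → ℝ := fun i j =>
    ∑ b : Fin cO, zext P a b i j * zext P c b (i - Δi) (j - Δj) with hg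
  have rhs1 : (∑ i : Fin k, ∑ j : Fin k, ∑ b : Fin cO,
        zext P a b (i:ℤ) (j:ℤ) * zext P c b ((i:ℤ) + (-Δi)) ((j:ℤ) + (-Δj)))
      = ∑ i : Fin k, ∑ j : Fin k, g (i:ℤ) (j:ℤ) := by
    simp only [hg, sub_eq_add_neg]
  rw [rhs1]
  -- extend to big window
  have win_j : ∀ x : ℤ, (∑ j : Fin k, g x (j:ℤ))
      = ∑ j ∈ Finset.Icc (-(2*(k:ℤ))) (3*(k:ℤ)), g x j := by
    intro x
    symm
    apply sum_window
    · intro j hj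
      apply Finset.sum_eq_zero; intro b _
      rw [zext_eq_zero P a b x j (by omega), zero_mul]
    · omega
    · omega
  have win_i : (∑ i : Fin k, ∑ j ∈ Finset.Icc (-(2*(k:ℤ))) (3*(k:ℤ)), g (i:ℤ) j)
      = ∑ i ∈ Finset.Icc (-(2*(k:ℤ))) (3*(k:ℤ)), ∑ j ∈ Finset.Icc (-(2*(k:ℤ))) (3*(k:ℤ)), g i j := by
    symm
    apply sum_window
    · intro i hi
      apply Finset.sum_eq_zero; intro j _
      apply Finset.sum_eq_zero; intro b _
      rw [zext_eq_zero P a b i j (by omega), zero_mul]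
    · omega
    · omega
  simp_rw [win_j]
  rw [win_i]
  -- now shift both coordinates
  rw [sum_Icc_shift (fun i => ∑ j ∈ Finset.Icc (-(2*(k:ℤ))) (3*(k:ℤ)), g i j)
    (-(2*(k:ℤ))) (3*(k:ℤ)) Δi]
  have shift_j : ∀ x : ℤ, (∑ j ∈ Finset.Icc (-(2*(k:ℤ))) (3*(k:ℤ)), g x j)
      = ∑ j ∈ Finset.Icc (-(2*(k:ℤ)) - Δj) (3*(k:ℤ) - Δj), g x (j + Δj) :=
    fun x => sum_Icc_shift (fun j => g x j) _ _ Δj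
  simp_rw [shift_j]
  -- now reduce back to Fin k using zext c vanishing
  have red_j : ∀ x : ℤ, (∑ j ∈ Finset.Icc (-(2*(k:ℤ)) - Δj) (3*(k:ℤ) - Δj), g (x + Δi) (j + Δj))
      = ∑ j : Fin k, g (x + Δi) ((j:ℤ) + Δj) := by
    intro x
    apply sum_window (g := fun j => g (x + Δi) (j + Δj))
    · intro j hj
      apply Finset.sum_eq_zero; intro b _
      rw [zext_eq_zero P c b (x + Δi - Δi) (j + Δj - Δj) (by omega), mul_zero]
    · omega
    · omega
  simp_rw [red_j]
  have red_i : (∑ i ∈ Finset.Icc (-(2*(k:ℤ)) - Δi) (3*(k:ℤ) - Δi), ∑ j : Fin k, g (i + Δi) ((j:ℤ) + Δj))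
      = ∑ i : Fin k, ∑ j : Fin k, g ((i:ℤ) + Δi) ((j:ℤ) + Δj) := by
    apply sum_window (g := fun i => ∑ j : Fin k, g (i + Δi) ((j:ℤ) + Δj))
    · intro i hi
      apply Finset.sum_eq_zero; intro j _
      apply Finset.sum_eq_zero; intro b _
      rw [zext_eq_zero P c b (i + Δi - Δi) ((j:ℤ) + Δj - Δj) (by omega), mul_zero]
    · omega
    · omega
  rw [red_i]
  -- final: unfold
  rw [Hfun]
  congr 1; ext i; congr 1; ext j
  simp only [hg]
  congr 1; ext b
  have e1 : (i:ℤ) + Δi - Δi = (i:ℤ) := by ring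
  have e2 : (j:ℤ) + Δj - Δj = (j:ℤ) := by ring
  rw [e1, e2, mul_comm]

lemma sum_fin_le (n : ℕ) (x : ℤ) (f : ℤ → ℝ) (t : Finset ℤ)
    (hf : ∀ Δ, 0 ≤ f Δ) (hf0 : ∀ Δ, Δ ∉ t → f Δ = 0) :
    ∑ i : Fin n, f ((i:ℤ) - x) ≤ ∑ Δ ∈ t, f Δ := by
  rw [Fin.sum_univ_eq_sum_range (fun i : ℕ => f ((i:ℤ) - x))]
  have h1 : ∑ i ∈ Finset.range n, f ((i:ℤ) - x)
      = ∑ y ∈ (Finset.range n).image (fun i : ℕ => (i:ℤ) - x), f y := by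
    rw [Finset.sum_image]
    intro a _ b _ h; have h' : (a:ℤ) - x = (b:ℤ) - x := h; omega
  rw [h1]
  set s := (Finset.range n).image (fun i : ℕ => (i:ℤ) - x)
  calc ∑ y ∈ s, f y = ∑ y ∈ s ∩ t, f y := by
        symm; apply Finset.sum_subset (Finset.inter_subset_left)
        intro y hy hy'
        apply hf0
        intro hyt
        exact hy' (Finset.mem_inter.mpr ⟨hy, hyt⟩)
    _ ≤ ∑ Δ ∈ t, f Δ := by
        apply Finset.sum_le_sum_of_subset_of_nonneg Finset.inter_subset_right
        intro i _ _; exact hf i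

lemma row_bound {k n cI cO : ℕ} (hk : 0 < k) (hn : 0 < n)
    (P : Fin k → Fin k → Fin cI → Fin cO → ℝ)
    (c : Fin cI) (i₁ j₁ : Fin n) :
    ∑ q : Fin cI × Fin n × Fin n,
      |∑ o : Fin cO × Fin (n + k - 1) × Fin (n + k - 1),
        convJacobian k n cI cO P o (c, i₁, j₁) * convJacobian k n cI cO P o q|
    ≤ ∑ Δi ∈ Finset.Icc (-(k : ℤ) + 1) ((k : ℤ) - 1),
        ∑ Δj ∈ Finset.Icc (-(k : ℤ) + 1) ((k : ℤ) - 1),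
          ∑ a : Fin cI,
            |∑ i : Fin k, ∑ j : Fin k, ∑ b : Fin cO,
              zext P a b (i : ℤ) (j : ℤ) * zext P c b ((i : ℤ) + Δi) ((j : ℤ) + Δj)| := by
  set box := Finset.Icc (-(k : ℤ) + 1) ((k : ℤ) - 1) with hbox
  have step1 : ∑ q : Fin cI × Fin n × Fin n,
      |∑ o : Fin cO × Fin (n + k - 1) × Fin (n + k - 1),
        convJacobian k n cI cO P o (c, i₁, j₁) * convJacobian k n cI cO P o q|
      = ∑ a : Fin cI, ∑ i₁' : Fin n, ∑ j₁' : Fin n,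
          |Hfun P c a ((i₁':ℤ) - (i₁:ℤ)) ((j₁':ℤ) - (j₁:ℤ))| := by
    rw [Fintype.sum_prod_type]
    congr 1; ext a
    rw [Fintype.sum_prod_type]
    congr 1; ext i₁'; congr 1; ext j₁'
    rw [T_eq hk hn P c a i₁ j₁ i₁' j₁']
  rw [step1]
  have step2 : ∀ a : Fin cI,
      (∑ i₁' : Fin n, ∑ j₁' : Fin n, |Hfun P c a ((i₁':ℤ) - (i₁:ℤ)) ((j₁':ℤ) - (j₁:ℤ))|)
      ≤ ∑ Δi ∈ box, ∑ Δj ∈ box, |Hfun P c a Δi Δj| := by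
    intro a
    calc ∑ i₁' : Fin n, ∑ j₁' : Fin n, |Hfun P c a ((i₁':ℤ) - (i₁:ℤ)) ((j₁':ℤ) - (j₁:ℤ))|
        ≤ ∑ i₁' : Fin n, ∑ Δj ∈ box, |Hfun P c a ((i₁':ℤ) - (i₁:ℤ)) Δj| := by
          apply Finset.sum_le_sum; intro i₁' _
          apply sum_fin_le n (j₁:ℤ) _ box (fun Δ => abs_nonneg _)
          intro Δ hΔ
          rw [Hfun_zero P c a _ _ (Or.inr hΔ), abs_zero]
      _ ≤ ∑ Δi ∈ box, ∑ Δj ∈ box, |Hfun P c a Δi Δj| := by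
          apply sum_fin_le n (i₁:ℤ) (fun Δi => ∑ Δj ∈ box, |Hfun P c a Δi Δj|) box
          · intro Δ; exact Finset.sum_nonneg fun _ _ => abs_nonneg _
          · intro Δ hΔ
            apply Finset.sum_eq_zero; intro Δj _
            rw [Hfun_zero P c a _ _ (Or.inl hΔ), abs_zero]
  calc ∑ a : Fin cI, ∑ i₁' : Fin n, ∑ j₁' : Fin n,
        |Hfun P c a ((i₁':ℤ) - (i₁:ℤ)) ((j₁':ℤ) - (j₁:ℤ))|
      ≤ ∑ a : Fin cI, ∑ Δi ∈ box, ∑ Δj ∈ box, |Hfun P c a Δi Δj| :=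
        Finset.sum_le_sum fun a _ => step2 a
    _ = ∑ Δi ∈ box, ∑ Δj ∈ box, ∑ a : Fin cI, |Hfun P c a Δi Δj| := by
        rw [Finset.sum_comm]
        congr 1; ext Δi
        rw [Finset.sum_comm]
    _ = ∑ Δi ∈ box, ∑ Δj ∈ box, ∑ a : Fin cI,
          |∑ i : Fin k, ∑ j : Fin k, ∑ b : Fin cO,
            zext P a b (i : ℤ) (j : ℤ) * zext P c b ((i : ℤ) + Δi) ((j : ℤ) + Δj)| := by
        -- use H_eq_G and negate indices
        have neg_reindex : ∀ F : ℤ → ℝ, (∑ Δ ∈ box, F Δ) = ∑ Δ ∈ box, F (-Δ) := by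
          intro F
          apply Finset.sum_nbij' (fun x : ℤ => -x) (fun x : ℤ => -x)
          · intro x hx; simp only [hbox, Finset.mem_Icc] at hx ⊢; omega
          · intro x hx; simp only [hbox, Finset.mem_Icc] at hx ⊢; omega
          · intro x _; ring
          · intro x _; ring
          · intro x _; rw [neg_neg]
        rw [neg_reindex (fun Δi => ∑ Δj ∈ box, ∑ a : Fin cI, |Hfun P c a Δi Δj|)]
        apply Finset.sum_congr rfl
        intro Δi hΔi
        rw [neg_reindex (fun Δj => ∑ a : Fin cI, |Hfun P c a (-Δi) Δj|)]
        apply Finset.sum_congr rfl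
        intro Δj hΔj
        apply Finset.sum_congr rfl
        intro a _
        have hΔi' : -Δi ∈ box := by
          simp only [hbox, Finset.mem_Icc] at hΔi ⊢; omega
        have hΔj' : -Δj ∈ box := by
          simp only [hbox, Finset.mem_Icc] at hΔj ⊢; omega
        rw [H_eq_G P c a (-Δi) (-Δj) hΔi' hΔj']
        simp only [neg_neg]

lemma quad_bound {ι : Type*} [Fintype ι] (T : ι → ι → ℝ)
    (hsym : ∀ p q, |T p q| = |T q p|) (w : ι → ℝ) :
    ∑ p, ∑ q, T p q * (w p * w q) ≤ ∑ p, (∑ q, |T p q|) * w p ^ 2 := by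
  have step : ∀ p q, T p q * (w p * w q) ≤ |T p q| * (w p ^ 2 + w q ^ 2) / 2 := by
    intro p q
    have h1 : T p q * (w p * w q) ≤ |T p q * (w p * w q)| := le_abs_self _
    have h2 : |T p q * (w p * w q)| = |T p q| * (|w p| * |w q|) := by
      rw [abs_mul, abs_mul]
    nlinarith [abs_nonneg (T p q), sq_abs (w p), sq_abs (w q),
      sq_nonneg (|w p| - |w q|), abs_nonneg (w p), abs_nonneg (w q)]
  calc ∑ p, ∑ q, T p q * (w p * w q)
      ≤ ∑ p, ∑ q, |T p q| * (w p ^ 2 + w q ^ 2) / 2 := by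
        apply Finset.sum_le_sum; intro p _
        apply Finset.sum_le_sum; intro q _
        exact step p q
    _ = ∑ p, (∑ q, |T p q|) * w p ^ 2 := by
        have swap : ∑ p, ∑ q, |T p q| * w q ^ 2 = ∑ p, ∑ q, |T p q| * w p ^ 2 := by
          rw [Finset.sum_comm]
          congr 1; ext p; congr 1; ext q; rw [hsym]
        have expand : ∀ p q : ι, |T p q| * (w p ^ 2 + w q ^ 2) / 2
            = (|T p q| * w p ^ 2) / 2 + (|T p q| * w q ^ 2) / 2 := by intros; ring
        simp_rw [expand, Finset.sum_add_distrib, ← Finset.sum_div]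
        rw [show ∀ A B : ℝ, A = B → A/2 + B/2 = A from fun A B h => by rw [h]; ring]
        · simp_rw [Finset.sum_mul]
        · exact swap.symm


/-- **Convolutional AOL layers (maximally padded case).** With the
channel-wise AOL rescaling factors `d c = (S c)^(-1/2)` (and `0` if `S c = 0`)
and the diagonal matrix `D` whose entry at column index `(c, i₁, j₁)` is `d c`,
the spectral norm of `J * D` is at most `1`: the rescaled maximally padded
convolution `x ↦ J (D x)` is `1`-Lipschitz in the Euclidean norms, and so is
any convolutional layer obtained from it by composing with a (center-)cropping
of the output coordinates and adding a bias. -/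
theorem aol_convolutional_layer_one_lipschitz {k n cI cO : ℕ}
    (hk : 0 < k) (hn : 0 < n) (hcI : 0 < cI) (hcO : 0 < cO)
    (P : Fin k → Fin k → Fin cI → Fin cO → ℝ)
    (J : Matrix (Fin cO × Fin (n + k - 1) × Fin (n + k - 1)) (Fin cI × Fin n × Fin n) ℝ)
    (hJ : J = convJacobian k n cI cO P)
    (S : Fin cI → ℝ)
    (hS : ∀ c, S c =
      ∑ Δi ∈ Finset.Icc (-(k : ℤ) + 1) ((k : ℤ) - 1),
        ∑ Δj ∈ Finset.Icc (-(k : ℤ) + 1) ((k : ℤ) - 1),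
          ∑ a : Fin cI,
            |∑ i : Fin k, ∑ j : Fin k, ∑ b : Fin cO,
              zext P a b (i : ℤ) (j : ℤ) * zext P c b ((i : ℤ) + Δi) ((j : ℤ) + Δj)|)
    (d : Fin cI → ℝ)
    (hd : ∀ c, d c = if S c ≠ 0 then (S c) ^ (-(1 : ℝ) / 2) else 0)
    (D : Matrix (Fin cI × Fin n × Fin n) (Fin cI × Fin n × Fin n) ℝ)
    (hD : D = Matrix.diagonal (fun p => d p.1)) :
    (∀ v : Fin cI × Fin n × Fin n → ℝ,
      Real.sqrt (∑ o, ((J * D).mulVec v o) ^ 2) ≤ Real.sqrt (∑ p, (v p) ^ 2)) ∧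
    (∀ (β : Type) [Fintype β]
        (ρ : β → Fin cO × Fin (n + k - 1) × Fin (n + k - 1)),
      Function.Injective ρ →
      ∀ (b : Fin cO × Fin (n + k - 1) × Fin (n + k - 1) → ℝ)
        (x y : Fin cI × Fin n × Fin n → ℝ),
        Real.sqrt (∑ o : β,
            ((J.mulVec (D.mulVec x) + b) (ρ o) - (J.mulVec (D.mulVec y) + b) (ρ o)) ^ 2)
          ≤ Real.sqrt (∑ p, (x p - y p) ^ 2)) := by
  -- nonnegativity of S
  have hSnn : ∀ c, 0 ≤ S c := by
    intro c
    rw [hS c]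
    apply Finset.sum_nonneg; intro Δi _
    apply Finset.sum_nonneg; intro Δj _
    apply Finset.sum_nonneg; intro a _
    exact abs_nonneg _
  -- main quadratic inequality
  have main : ∀ v : Fin cI × Fin n × Fin n → ℝ,
      (∑ o, ((J * D).mulVec v o) ^ 2) ≤ ∑ p, (v p) ^ 2 := by
    intro v
    set w : Fin cI × Fin n × Fin n → ℝ := fun p => d p.1 * v p with hw
    have hDv : D.mulVec v = w := by
      rw [hD]; ext p; rw [Matrix.mulVec_diagonal]
    have hmv : (J * D).mulVec v = J.mulVec w := by
      rw [← Matrix.mulVec_mulVec, hDv]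
    rw [hmv]
    set T : (Fin cI × Fin n × Fin n) → (Fin cI × Fin n × Fin n) → ℝ :=
      fun p q => ∑ o, J o p * J o q with hT
    have expand : ∑ o, (J.mulVec w o) ^ 2 = ∑ p, ∑ q, T p q * (w p * w q) := by
      simp only [Matrix.mulVec, dotProduct]
      calc ∑ o, (∑ p, J o p * w p) ^ 2
          = ∑ o, ∑ p, ∑ q, (J o p * w p) * (J o q * w q) := by
            congr 1; ext o; rw [sq, Finset.sum_mul_sum]
        _ = ∑ p, ∑ o, ∑ q, (J o p * w p) * (J o q * w q) := Finset.sum_comm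
        _ = ∑ p, ∑ q, ∑ o, (J o p * w p) * (J o q * w q) := by
            congr 1; ext p; exact Finset.sum_comm
        _ = ∑ p, ∑ q, T p q * (w p * w q) := by
            congr 1; ext p; congr 1; ext q
            rw [hT, Finset.sum_mul]
            congr 1; ext o; ring
    rw [expand]
    have hsym : ∀ p q, |T p q| = |T q p| := by
      intro p q
      rw [hT]
      congr 1
      apply Finset.sum_congr rfl
      intro o _
      ring
    calc ∑ p, ∑ q, T p q * (w p * w q)
        ≤ ∑ p, (∑ q, |T p q|) * w p ^ 2 := quad_bound T hsym w
      _ ≤ ∑ p, (v p) ^ 2 := by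
          apply Finset.sum_le_sum
          rintro ⟨c, i₁, j₁⟩ _
          have hrow : (∑ q, |T (c, i₁, j₁) q|) ≤ S c := by
            rw [hS c, hT]
            simp only [hJ]
            exact row_bound hk hn P c i₁ j₁
          by_cases hc : S c = 0
          · have hd0 : d c = 0 := by rw [hd c, if_neg (by simp [hc])]
            have : w (c, i₁, j₁) = 0 := by rw [hw]; simp [hd0]
            rw [this]
            simp [sq_nonneg]
          · have hSpos : 0 < S c := lt_of_le_of_ne (hSnn c) (Ne.symm hc)
            have hdsq : d c ^ 2 = (S c)⁻¹ := by
              rw [hd c, if_pos hc]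
              rw [← Real.rpow_natCast (S c ^ (-(1:ℝ)/2)) 2, ← Real.rpow_mul hSpos.le]
              norm_num [Real.rpow_neg_one]
            have hwsq : w (c, i₁, j₁) ^ 2 = (S c)⁻¹ * v (c, i₁, j₁) ^ 2 := by
              rw [hw]
              simp only [mul_pow]
              rw [hdsq]
            rw [hwsq]
            calc (∑ q, |T (c, i₁, j₁) q|) * ((S c)⁻¹ * v (c, i₁, j₁) ^ 2)
                ≤ S c * ((S c)⁻¹ * v (c, i₁, j₁) ^ 2) := by
                  apply mul_le_mul_of_nonneg_right hrow
                  positivity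
              _ = v (c, i₁, j₁) ^ 2 := by
                  field_simp
  constructor
  · intro v
    exact Real.sqrt_le_sqrt (main v)
  · intro β _ ρ hρ b x y
    set v : Fin cI × Fin n × Fin n → ℝ := fun p => x p - y p with hv
    have hdiff : ∀ o, (J.mulVec (D.mulVec x) + b) o - (J.mulVec (D.mulVec y) + b) o
        = (J * D).mulVec v o := by
      intro o
      have h1 : (J * D).mulVec v = (J * D).mulVec x - (J * D).mulVec y := by
        have hxy : v = x - y := rfl
        rw [hxy, Matrix.mulVec_sub]
      rw [h1]
      simp [Matrix.mulVec_mulVec]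
    simp_rw [hdiff]
    have step : (∑ o : β, ((J * D).mulVec v (ρ o)) ^ 2)
        ≤ ∑ o, ((J * D).mulVec v o) ^ 2 := by
      classical
      have himg : ∑ o : β, ((J * D).mulVec v (ρ o)) ^ 2
          = ∑ o' ∈ Finset.univ.image ρ, ((J * D).mulVec v o') ^ 2 := by
        rw [Finset.sum_image (fun a _ b _ h => hρ h)]
      rw [himg]
      apply Finset.sum_le_sum_of_subset_of_nonneg (Finset.subset_univ _)
      intro i _ _
      positivity
    calc Real.sqrt (∑ o : β, ((J * D).mulVec v (ρ o)) ^ 2)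
        ≤ Real.sqrt (∑ o, ((J * D).mulVec v o) ^ 2) := Real.sqrt_le_sqrt step
      _ ≤ Real.sqrt (∑ p, (v p) ^ 2) := Real.sqrt_le_sqrt (main v)
      _ = Real.sqrt (∑ p, (x p - y p) ^ 2) := rfl
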